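/- Let P, Q be probability measures on a measurable space X and let K be a Markov kernel from X to a measurable space Z. Write P' := PK and Q' := QK for the pushforward measures (the compositions of P and Q with the kernel K). Then for every ε ≥ 0, δ_{Q'‖P'}(ε) ≤ δ_{Q‖P}(ε). -/

import Mathlib

open MeasureTheory ProbabilityTheory

/-- The privacy curve of the binary experiment `(P,Q)`:
`δ_{Q‖P}(ε) = sup_{A measurable} (Q(A) − e^ε P(A))`. -/
noncomputable def privCurve {X : Type*} [MeasurableSpace X] (P Q : Measure X) (ε : ℝ) : ℝ :=
  ⨆ A : {A : Set X // MeasurableSet A}, ((Q A.1).toReal - Real.exp ε * (P A.1).toReal)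

/-- Data processing inequality for privacy curves: if `K` is a Markov kernel from `X`
to `Z` and `P' = PK`, `Q' = QK` are the compositions, then
`δ_{Q'‖P'}(ε) ≤ δ_{Q‖P}(ε)` for every `ε ≥ 0`. -/
theorem privacy_curve_dpi
    {X Z : Type*} [MeasurableSpace X] [MeasurableSpace Z]
    (P Q : Measure X) [IsProbabilityMeasure P] [IsProbabilityMeasure Q]
    (K : Kernel X Z) [IsMarkovKernel K]
    (ε : ℝ) (hε : 0 ≤ ε) :
    privCurve (P.bind K) (Q.bind K) ε ≤ privCurve P Q ε := by
  set δ := privCurve P Q ε with hδdef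
  -- the defining supremum is bounded above
  have hbdd : BddAbove (Set.range fun A : {A : Set X // MeasurableSet A} =>
      ((Q A.1).toReal - Real.exp ε * (P A.1).toReal)) := by
    refine ⟨1, ?_⟩
    rintro _ ⟨A, rfl⟩
    have h1 : (Q A.1).toReal ≤ 1 := by
      have h := measure_mono (μ := Q) (Set.subset_univ A.1)
      have := ENNReal.toReal_mono (measure_ne_top Q _) h
      simpa using this
    have h2 : 0 ≤ Real.exp ε * (P A.1).toReal := by positivity
    simp only
    linarith
  have hδ0 : 0 ≤ δ := by
    have := le_ciSup hbdd (⟨∅, MeasurableSet.empty⟩ : {A : Set X // MeasurableSet A})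
    simpa [hδdef, privCurve] using this
  -- the set-wise inequality, in `ℝ≥0∞`
  have hA : ∀ A : Set X, MeasurableSet A →
      Q A ≤ ENNReal.ofReal (Real.exp ε) * P A + ENNReal.ofReal δ := by
    intro A hAm
    have h := le_ciSup hbdd (⟨A, hAm⟩ : {A : Set X // MeasurableSet A})
    have h2 : (Q A).toReal - Real.exp ε * (P A).toReal ≤ δ := h
    have h' : (Q A).toReal ≤ Real.exp ε * (P A).toReal + δ := by linarith
    calc Q A = ENNReal.ofReal ((Q A).toReal) :=
          (ENNReal.ofReal_toReal (measure_ne_top Q A)).symm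
      _ ≤ ENNReal.ofReal (Real.exp ε * (P A).toReal + δ) := ENNReal.ofReal_le_ofReal h'
      _ ≤ ENNReal.ofReal (Real.exp ε) * P A + ENNReal.ofReal δ := by
          rw [ENNReal.ofReal_add (by positivity) hδ0,
            ENNReal.ofReal_mul (Real.exp_nonneg ε)]
          gcongr
          exact ENNReal.ofReal_toReal_le
  refine ciSup_le ?_
  rintro ⟨B, hB⟩
  simp only
  set f : X → ℝ := fun x => (K x B).toReal with hf
  have hfm : Measurable f := (K.measurable_coe hB).ennreal_toReal
  have hf01 : ∀ x, f x ≤ 1 := by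
    intro x
    have h : K x B ≤ 1 := prob_le_one
    have := ENNReal.toReal_mono ENNReal.one_ne_top h
    simpa [hf] using this
  -- layer cake representation of `μ.bind K B`
  have key : ∀ (μ : Measure X),
      μ.bind K B = ∫⁻ t in Set.Ioi (0:ℝ), μ {x | t < f x} := by
    intro μ
    rw [Measure.bind_apply hB K.measurable.aemeasurable]
    have h1 : ∀ x, K x B = ENNReal.ofReal (f x) := fun x =>
      (ENNReal.ofReal_toReal (measure_ne_top _ _)).symm
    calc ∫⁻ x, K x B ∂μ = ∫⁻ x, ENNReal.ofReal (f x) ∂μ := by simp_rw [h1]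
      _ = _ := lintegral_eq_lintegral_meas_lt μ
          (Filter.Eventually.of_forall fun x => ENNReal.toReal_nonneg) hfm.aemeasurable
  -- restriction of the layer-cake integral for Q to `(0,1]`
  have hIoi : ∫⁻ t in Set.Ioi (1:ℝ), Q {x | t < f x} = 0 := by
    rw [setLIntegral_congr_fun measurableSet_Ioi
      (fun ⦃t⦄ (ht : t ∈ Set.Ioi (1:ℝ)) => ?_), lintegral_zero]
    have : {x | t < f x} = ∅ := by
      ext x
      simp only [Set.mem_setOf_eq, Set.mem_empty_iff_false, iff_false, not_lt]
      exact (hf01 x).trans (le_of_lt ht)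
    simp [this]
  have hsplitQ : ∫⁻ t in Set.Ioi (0:ℝ), Q {x | t < f x}
      = ∫⁻ t in Set.Ioc (0:ℝ) 1, Q {x | t < f x} := by
    rw [← Set.Ioc_union_Ioi_eq_Ioi (zero_le_one (α := ℝ)),
      lintegral_union measurableSet_Ioi (Set.Ioc_disjoint_Ioi le_rfl), hIoi, add_zero]
  -- the main bound in `ℝ≥0∞`
  have hQ : Q.bind K B ≤ ENNReal.ofReal (Real.exp ε) * (P.bind K B) + ENNReal.ofReal δ := by
    rw [key Q, key P, hsplitQ]
    calc ∫⁻ t in Set.Ioc (0:ℝ) 1, Q {x | t < f x}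
        ≤ ∫⁻ t in Set.Ioc (0:ℝ) 1,
            (ENNReal.ofReal (Real.exp ε) * P {x | t < f x} + ENNReal.ofReal δ) := by
          refine lintegral_mono fun t => hA _ ?_
          exact hfm measurableSet_Ioi
      _ = (ENNReal.ofReal (Real.exp ε) * ∫⁻ t in Set.Ioc (0:ℝ) 1, P {x | t < f x})
            + ENNReal.ofReal δ * volume (Set.Ioc (0:ℝ) 1) := by
          rw [lintegral_add_right' _ aemeasurable_const,
            lintegral_const_mul' _ _ ENNReal.ofReal_ne_top, setLIntegral_const]
      _ ≤ (ENNReal.ofReal (Real.exp ε) * ∫⁻ t in Set.Ioi (0:ℝ), P {x | t < f x})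
            + ENNReal.ofReal δ := by
          have hv : volume (Set.Ioc (0:ℝ) 1) = 1 := by simp [Real.volume_Ioc]
          rw [hv, mul_one]
          gcongr
          exact Set.Ioc_subset_Ioi_self
  -- finiteness facts
  have hPfin : P.bind K B ≠ ⊤ := by
    rw [Measure.bind_apply hB K.measurable.aemeasurable]
    have h : ∫⁻ x, K x B ∂P ≤ ∫⁻ _, 1 ∂P := lintegral_mono fun x => prob_le_one
    simp only [lintegral_one, measure_univ] at h
    exact (h.trans_lt ENNReal.one_lt_top).ne
  have hRHSfin : ENNReal.ofReal (Real.exp ε) * (P.bind K B) + ENNReal.ofReal δ ≠ ⊤ :=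
    ENNReal.add_ne_top.2 ⟨ENNReal.mul_ne_top ENNReal.ofReal_ne_top hPfin, ENNReal.ofReal_ne_top⟩
  have hreal := ENNReal.toReal_mono hRHSfin hQ
  rw [ENNReal.toReal_add (ENNReal.mul_ne_top ENNReal.ofReal_ne_top hPfin) ENNReal.ofReal_ne_top,
    ENNReal.toReal_mul, ENNReal.toReal_ofReal (Real.exp_nonneg ε),
    ENNReal.toReal_ofReal hδ0] at hreal
  linarith
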